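/- Let σ_low > 0 and let b : ℝ → ℝ be defined by b(u) = -u for u ≤ -σ_low², b(u) = (σ_low² - u)²/(4σ_low²) for -σ_low² < u < 0, and for u ≥ 0, b(u) = a(√u)² where a(σ) = max((σ_low² - σ²)/(2σ_low), 0, (σ² - σ_high²)/(2σ_high)) with 0 < σ_low ≤ σ_high. Then b is convex on ℝ and b(u) = 0 exactly for u ∈ [σ_low², σ_high²]. -/

import Mathlib

/-- derivative of `(max (u - c) 0)^2` -/
lemma hasDerivAt_posPart_sq (c x : ℝ) :
    HasDerivAt (fun u : ℝ => max (u - c) 0 ^ 2) (2 * max (x - c) 0) x := by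
  rcases lt_trichotomy x c with h | h | h
  · have h0 : (2 : ℝ) * max (x - c) 0 = 0 := by
      rw [max_eq_right (by linarith)]; ring
    rw [h0]
    have : (fun u : ℝ => max (u - c) 0 ^ 2) =ᶠ[nhds x] fun _ => (0 : ℝ) := by
      filter_upwards [Iio_mem_nhds h] with u hu
      rw [max_eq_right (by simp at hu ⊢; linarith)]; ring
    exact (hasDerivAt_const x (0:ℝ)).congr_of_eventuallyEq this
  · subst h
    have h0 : (2 : ℝ) * max (x - x) 0 = 0 := by simp
    rw [h0]
    have hle : HasDerivWithinAt (fun u : ℝ => max (u - x) 0 ^ 2) 0 (Set.Iic x) x := by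
      have := (hasDerivAt_const x (0:ℝ)).hasDerivWithinAt (s := Set.Iic x)
      refine this.congr (fun u hu => ?_) (by simp)
      rw [max_eq_right (by simp at hu ⊢; linarith)]; ring
    have hri : HasDerivWithinAt (fun u : ℝ => max (u - x) 0 ^ 2) 0 (Set.Ici x) x := by
      have hd : HasDerivAt (fun u : ℝ => (u - x) ^ 2) (2 * (x - x)) x := by
        simpa using ((hasDerivAt_id x).sub_const x).fun_pow 2
      have hd' : HasDerivAt (fun u : ℝ => (u - x) ^ 2) 0 x := by simpa using hd
      refine hd'.hasDerivWithinAt.congr (fun u hu => ?_) (by simp)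
      rw [max_eq_left (by simp at hu ⊢; linarith)]
    have := hle.union hri
    rwa [Set.Iic_union_Ici, hasDerivWithinAt_univ] at this
  · have : (fun u : ℝ => max (u - c) 0 ^ 2) =ᶠ[nhds x] fun u => (u - c) ^ 2 := by
      filter_upwards [Ioi_mem_nhds h] with u hu
      rw [max_eq_left (by simp at hu ⊢; linarith)]
    have hd : HasDerivAt (fun u : ℝ => (u - c) ^ 2) (2 * (x - c)) x := by
      simpa using ((hasDerivAt_id x).sub_const c).fun_pow 2
    have := hd.congr_of_eventuallyEq this
    rwa [max_eq_left (by linarith)]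

/-- The function `b` of equation (3.35) of the paper is convex and vanishes exactly
on `[σ_low², σ_high²]`. -/
theorem stmt_18 (σlow σhigh : ℝ) (hσ0 : 0 < σlow) (hσ : σlow ≤ σhigh)
    (a b : ℝ → ℝ)
    (ha : ∀ σ : ℝ, a σ = max (max ((σlow ^ 2 - σ ^ 2) / (2 * σlow)) 0)
      ((σ ^ 2 - σhigh ^ 2) / (2 * σhigh)))
    (hb1 : ∀ u : ℝ, u ≤ -σlow ^ 2 → b u = -u)
    (hb2 : ∀ u : ℝ, -σlow ^ 2 < u → u < 0 → b u = (σlow ^ 2 - u) ^ 2 / (4 * σlow ^ 2))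
    (hb3 : ∀ u : ℝ, 0 ≤ u → b u = (a (Real.sqrt u)) ^ 2) :
    ConvexOn ℝ Set.univ b ∧ ∀ u : ℝ, (b u = 0 ↔ σlow ^ 2 ≤ u ∧ u ≤ σhigh ^ 2) := by
  have hσh : 0 < σhigh := lt_of_lt_of_le hσ0 hσ
  have hL : (0:ℝ) < σlow ^ 2 := by positivity
  have hH : (0:ℝ) < σhigh ^ 2 := by positivity
  have hLH : σlow ^ 2 ≤ σhigh ^ 2 := by nlinarith
  -- explicit formula for b
  set F : ℝ → ℝ := fun u =>
      -u + max (u - (-σlow ^ 2)) 0 ^ 2 / (4 * σlow ^ 2)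
        - max (u - σlow ^ 2) 0 ^ 2 / (4 * σlow ^ 2)
        + max (u - σhigh ^ 2) 0 ^ 2 / (4 * σhigh ^ 2) with hF_def
  have hbF : ∀ u : ℝ, b u = F u := by
    intro u
    rcases le_or_gt u (-σlow ^ 2) with h1 | h1
    · rw [hb1 u h1, hF_def]
      simp only
      rw [max_eq_right (by linarith), max_eq_right (by linarith),
        max_eq_right (by linarith)]
      ring
    · rcases lt_or_ge u 0 with h2 | h2
      · rw [hb2 u h1 h2, hF_def]
        simp only
        rw [max_eq_left (by linarith), max_eq_right (by linarith),
          max_eq_right (by linarith)]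
        field_simp
        ring
      · rw [hb3 u h2, ha, Real.sq_sqrt h2, hF_def]
        simp only
        rcases le_or_gt u (σlow ^ 2) with h3 | h3
        · have hX : (0:ℝ) ≤ (σlow ^ 2 - u) / (2 * σlow) :=
            div_nonneg (by linarith) (by positivity)
          have hY : (u - σhigh ^ 2) / (2 * σhigh) ≤ 0 :=
            div_nonpos_iff.mpr (Or.inr ⟨by linarith, by positivity⟩)
          rw [max_eq_left hX, max_eq_left (le_trans hY hX),
            max_eq_left (by linarith), max_eq_right (by linarith),
            max_eq_right (by linarith)]
          field_simp
          ring
        · rcases le_or_gt u (σhigh ^ 2) with h4 | h4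
          · have hX : (σlow ^ 2 - u) / (2 * σlow) ≤ 0 :=
              div_nonpos_iff.mpr (Or.inr ⟨by linarith, by positivity⟩)
            have hY : (u - σhigh ^ 2) / (2 * σhigh) ≤ 0 :=
              div_nonpos_iff.mpr (Or.inr ⟨by linarith, by positivity⟩)
            rw [max_eq_right hX, max_eq_left hY,
              max_eq_left (by linarith), max_eq_left (by linarith),
              max_eq_right (by linarith)]
            field_simp
            ring
          · have hX : (σlow ^ 2 - u) / (2 * σlow) ≤ 0 :=
              div_nonpos_iff.mpr (Or.inr ⟨by linarith, by positivity⟩)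
            have hY : (0:ℝ) ≤ (u - σhigh ^ 2) / (2 * σhigh) :=
              div_nonneg (by linarith) (by positivity)
            rw [max_eq_right hX, max_eq_right hY,
              max_eq_left (by linarith), max_eq_left (by linarith),
              max_eq_left (by linarith)]
            field_simp
            ring
  constructor
  · -- convexity
    have hbeq : b = F := funext hbF
    rw [hbeq]
    set g : ℝ → ℝ := fun x =>
        -1 + 2 * max (x - (-σlow ^ 2)) 0 / (4 * σlow ^ 2)
          - 2 * max (x - σlow ^ 2) 0 / (4 * σlow ^ 2)
          + 2 * max (x - σhigh ^ 2) 0 / (4 * σhigh ^ 2) with hg_def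
    have hFd : ∀ x : ℝ, HasDerivAt F (g x) x := by
      intro x
      have h1 := (hasDerivAt_posPart_sq (-σlow ^ 2) x).div_const (4 * σlow ^ 2)
      have h2 := (hasDerivAt_posPart_sq (σlow ^ 2) x).div_const (4 * σlow ^ 2)
      have h3 := (hasDerivAt_posPart_sq (σhigh ^ 2) x).div_const (4 * σhigh ^ 2)
      have h0 : HasDerivAt (fun u : ℝ => -u) (-1) x := by
        simpa using hasDerivAt_neg' (x := x)
      exact ((h0.add h1).sub h2).add h3
    have hdiff : Differentiable ℝ F := fun x => (hFd x).differentiableAt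
    have hderiv : deriv F = g := funext fun x => (hFd x).deriv
    have hmono : Monotone g := by
      intro x y hxy
      have key : max (x - (-σlow ^ 2)) 0 - max (x - σlow ^ 2) 0 ≤
          max (y - (-σlow ^ 2)) 0 - max (y - σlow ^ 2) 0 := by
        rcases max_cases (x - (-σlow ^ 2)) (0:ℝ) with ⟨e1, i1⟩ | ⟨e1, i1⟩ <;>
        rcases max_cases (x - σlow ^ 2) (0:ℝ) with ⟨e2, i2⟩ | ⟨e2, i2⟩ <;>
        rcases max_cases (y - (-σlow ^ 2)) (0:ℝ) with ⟨e3, i3⟩ | ⟨e3, i3⟩ <;>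
        rcases max_cases (y - σlow ^ 2) (0:ℝ) with ⟨e4, i4⟩ | ⟨e4, i4⟩ <;>
          rw [e1, e2, e3, e4] <;> linarith
      have key2 : max (x - σhigh ^ 2) 0 ≤ max (y - σhigh ^ 2) 0 :=
        max_le_max (by linarith) le_rfl
      rw [hg_def]
      simp only
      have e1 : ∀ z : ℝ, -1 + 2 * max (z - (-σlow ^ 2)) 0 / (4 * σlow ^ 2)
          - 2 * max (z - σlow ^ 2) 0 / (4 * σlow ^ 2)
          + 2 * max (z - σhigh ^ 2) 0 / (4 * σhigh ^ 2)
          = -1 + (max (z - (-σlow ^ 2)) 0 - max (z - σlow ^ 2) 0) / (2 * σlow ^ 2)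
            + max (z - σhigh ^ 2) 0 / (2 * σhigh ^ 2) := by
        intro z; field_simp; ring
      rw [e1 x, e1 y]
      gcongr
    exact MonotoneOn.convexOn_of_deriv convex_univ hdiff.continuous.continuousOn
      (by rw [interior_univ]; exact hdiff.differentiableOn)
      (by rw [interior_univ, hderiv]; exact hmono.monotoneOn _)
  · -- vanishing set
    intro u
    rcases le_or_gt u (-σlow ^ 2) with h1 | h1
    · rw [hb1 u h1]
      constructor
      · intro h0; exact ⟨by linarith, by linarith⟩
      · rintro ⟨h2, h3⟩; linarith
    · rcases lt_or_ge u 0 with h2 | h2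
      · rw [hb2 u h1 h2]
        have hpos : 0 < (σlow ^ 2 - u) ^ 2 / (4 * σlow ^ 2) :=
          div_pos (pow_pos (by linarith) 2) (by positivity)
        constructor
        · intro h0; exact ⟨by linarith, by linarith⟩
        · rintro ⟨h3, h4⟩; linarith
      · rw [hb3 u h2, ha, Real.sq_sqrt h2]
        have h2s : (0:ℝ) < 2 * σlow := by linarith
        have h2h : (0:ℝ) < 2 * σhigh := by linarith
        constructor
        · intro h0
          have hA0 : max (max ((σlow ^ 2 - u) / (2 * σlow)) 0)
              ((u - σhigh ^ 2) / (2 * σhigh)) = 0 :=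
            pow_eq_zero_iff two_ne_zero |>.1 h0
          have hle : max (max ((σlow ^ 2 - u) / (2 * σlow)) 0)
              ((u - σhigh ^ 2) / (2 * σhigh)) ≤ 0 := le_of_eq hA0
          obtain ⟨hle1, hle2⟩ := max_le_iff.1 hle
          obtain ⟨hle3, _⟩ := max_le_iff.1 hle1
          constructor
          · rcases div_nonpos_iff.1 hle3 with ⟨_, hc⟩ | ⟨hc, _⟩ <;> linarith
          · rcases div_nonpos_iff.1 hle2 with ⟨_, hc⟩ | ⟨hc, _⟩ <;> linarith
        · rintro ⟨h3, h4⟩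
          have hX : (σlow ^ 2 - u) / (2 * σlow) ≤ 0 :=
            div_nonpos_iff.mpr (Or.inr ⟨by linarith, by positivity⟩)
          have hY : (u - σhigh ^ 2) / (2 * σhigh) ≤ 0 :=
            div_nonpos_iff.mpr (Or.inr ⟨by linarith, by positivity⟩)
          rw [max_eq_right hX, max_eq_left hY]
          norm_num
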